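/- Let v ∈ V_l, λ ∈ Φ(v) and i ∈ ℤ/eℤ. For an addable or removable i-node γ = (a,b,c) of λ define len(γ) = λ^{(c)}_a (so len(γ) = b for a removable node and len(γ) = b − 1 for an addable node). Then the enumeration of all addable and removable i-nodes of λ in increasing ≺_v-order is weakly increasing in len, and among nodes with equal len every removable i-node precedes every addable i-node. -/

import Mathlib

/-- An `l`-multipartition: `part c a` is the `(a+1)`-st part (0-based row index `a`)
of the partition `λ^{(c)}`. Parts are weakly decreasing and eventually zero. -/
structure MultiPartition (l : ℕ) where
  part : Fin l → ℕ → ℕ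
  antitone : ∀ c : Fin l, ∀ a b : ℕ, a ≤ b → part c b ≤ part c a
  finite : ∃ N : ℕ, ∀ c : Fin l, ∀ a : ℕ, N ≤ a → part c a = 0

namespace MultiPartition

variable {l : ℕ}

/-- A node is a triple `(a, b, c)`: row `a`, column `b` (both 0-based), component `c`.
The node `(a, b, c)` belongs to `lam` iff `b < lam.part c a`. -/
def content (v : Fin l → ℤ) (γ : ℕ × ℕ × Fin l) : ℤ :=
  (γ.2.1 : ℤ) - (γ.1 : ℤ) + v γ.2.2

def res (e : ℕ) (v : Fin l → ℤ) (γ : ℕ × ℕ × Fin l) : ZMod e :=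
  ((content v γ : ℤ) : ZMod e)

/-- The total order `≺_v` on `i`-nodes. -/
def prec (v : Fin l → ℤ) (γ δ : ℕ × ℕ × Fin l) : Prop :=
  content v γ < content v δ ∨ (content v γ = content v δ ∧ δ.2.2 < γ.2.2)

/-- `γ = (a,b,c)` is a removable node of `lam`: it is the last node of its row
(`lam.part c a = b + 1`) and removing it leaves a multipartition. -/
def Removable (lam : MultiPartition l) (γ : ℕ × ℕ × Fin l) : Prop :=
  lam.part γ.2.2 γ.1 = γ.2.1 + 1 ∧ lam.part γ.2.2 (γ.1 + 1) ≤ γ.2.1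

/-- `γ = (a,b,c)` is an addable node of `lam`: it sits just beyond its row
(`lam.part c a = b`) and adding it yields a multipartition. -/
def Addable (lam : MultiPartition l) (γ : ℕ × ℕ × Fin l) : Prop :=
  lam.part γ.2.2 γ.1 = γ.2.1 ∧ (γ.1 = 0 ∨ γ.2.1 < lam.part γ.2.2 (γ.1 - 1))

/-- The set `V_l` of multicharges: `v_0 ≤ v_1 ≤ ⋯ ≤ v_{l-1} < v_0 + e`. -/
def memV (e : ℕ) [NeZero l] (v : Fin l → ℤ) : Prop :=
  Monotone v ∧ ∀ c : Fin l, v c < v 0 + e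

/-- FLOTW condition for an `l`-partition with multicharge `v ∈ V_l`. -/
def IsFLOTW (e : ℕ) [NeZero l] (v : Fin l → ℤ) (lam : MultiPartition l) : Prop :=
  (∀ c : Fin l, ∀ h : (c : ℕ) + 1 < l, ∀ a : ℕ,
      lam.part ⟨(c : ℕ) + 1, h⟩ (a + (v ⟨(c : ℕ) + 1, h⟩ - v c).toNat) ≤ lam.part c a)
  ∧ (∀ a : ℕ,
      lam.part 0 (a + ((e : ℤ) + v 0 -
          v ⟨l - 1, Nat.sub_lt (Nat.pos_of_ne_zero (NeZero.ne l)) Nat.one_pos⟩).toNat)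
        ≤ lam.part ⟨l - 1, Nat.sub_lt (Nat.pos_of_ne_zero (NeZero.ne l)) Nat.one_pos⟩ a)
  ∧ ∀ k : ℕ, 1 ≤ k → ∃ i : ZMod e, ∀ c : Fin l, ∀ a : ℕ,
      lam.part c a = k → (((k : ℤ) - ((a : ℤ) + 1) + v c : ℤ) : ZMod e) ≠ i

end MultiPartition

open MultiPartition

lemma aux_L1 {l : ℕ} (lam : MultiPartition l) (v : Fin l → ℤ) (hv : Monotone v)
    (h1 : ∀ c : Fin l, ∀ h : (c : ℕ) + 1 < l, ∀ a : ℕ,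
      lam.part ⟨(c : ℕ) + 1, h⟩ (a + (v ⟨(c : ℕ) + 1, h⟩ - v c).toNat) ≤ lam.part c a) :
    ∀ (d : ℕ) (c : Fin l) (h : (c : ℕ) + d < l) (a : ℕ),
      lam.part ⟨(c : ℕ) + d, h⟩ (a + (v ⟨(c : ℕ) + d, h⟩ - v c).toNat) ≤ lam.part c a := by
  intro d
  induction d with
  | zero =>
      intro c h a
      have hc : (⟨(c : ℕ) + 0, h⟩ : Fin l) = c := Fin.ext (by simp)
      rw [hc]
      simp
  | succ d ih =>
      intro c h a
      have hd : (c : ℕ) + d < l := by omega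
      have hle1 : c ≤ (⟨(c : ℕ) + d, hd⟩ : Fin l) := by
        simp [Fin.le_def]
      have hle2 : (⟨(c : ℕ) + d, hd⟩ : Fin l) ≤ (⟨(c : ℕ) + (d + 1), h⟩ : Fin l) := by
        simp [Fin.le_def]
      have e1 : 0 ≤ v ⟨(c : ℕ) + d, hd⟩ - v c := sub_nonneg.2 (hv hle1)
      have e2 : 0 ≤ v ⟨(c : ℕ) + (d + 1), h⟩ - v ⟨(c : ℕ) + d, hd⟩ := sub_nonneg.2 (hv hle2)
      have h2 := h1 ⟨(c : ℕ) + d, hd⟩ (by omega) (a + (v ⟨(c : ℕ) + d, hd⟩ - v c).toNat)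
      have h3 := ih c hd a
      have harg : a + (v ⟨(c : ℕ) + (d + 1), h⟩ - v c).toNat
          = a + (v ⟨(c : ℕ) + d, hd⟩ - v c).toNat
            + (v ⟨(c : ℕ) + (d + 1), h⟩ - v ⟨(c : ℕ) + d, hd⟩).toNat := by omega
      rw [harg]
      exact le_trans h2 h3

lemma aux_le0 {l : ℕ} (lam : MultiPartition l) (v : Fin l → ℤ) (hv : Monotone v)
    (h1 : ∀ c : Fin l, ∀ h : (c : ℕ) + 1 < l, ∀ a : ℕ,
      lam.part ⟨(c : ℕ) + 1, h⟩ (a + (v ⟨(c : ℕ) + 1, h⟩ - v c).toNat) ≤ lam.part c a)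
    (c c' : Fin l) (hcc : c ≤ c') (a a' : ℕ)
    (h : (a : ℤ) + (v c' - v c) ≤ (a' : ℤ)) :
    lam.part c' a' ≤ lam.part c a := by
  have hcc' : (c : ℕ) ≤ (c' : ℕ) := hcc
  have hlt : (c : ℕ) + ((c' : ℕ) - (c : ℕ)) < l := by omega
  have hc' : (⟨(c : ℕ) + ((c' : ℕ) - (c : ℕ)), hlt⟩ : Fin l) = c' := Fin.ext (by simp; omega)
  have h2 := aux_L1 lam v hv h1 ((c' : ℕ) - (c : ℕ)) c hlt a
  rw [hc'] at h2
  have hnn : 0 ≤ v c' - v c := sub_nonneg.2 (hv hcc)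
  have hN : a + (v c' - v c).toNat ≤ a' := by omega
  exact le_trans (lam.antitone c' _ _ hN) h2

lemma aux_le1 {l e : ℕ} [NeZero l] (lam : MultiPartition l) (v : Fin l → ℤ)
    (hv : memV e v) (hlam : IsFLOTW e v lam)
    (c c' : Fin l) (a a' : ℕ)
    (h : (a : ℤ) + (v c' - v c + e) ≤ (a' : ℤ)) :
    lam.part c' a' ≤ lam.part c a := by
  set L : Fin l := ⟨l - 1, Nat.sub_lt (Nat.pos_of_ne_zero (NeZero.ne l)) Nat.one_pos⟩ with hL
  have hcL : c ≤ L := by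
    have := c.isLt
    simp only [Fin.le_def, hL]
    omega
  have h0c' : (0 : Fin l) ≤ c' := by
    simp only [Fin.le_def, Fin.val_zero]
    omega
  have e1 : 0 ≤ v L - v c := sub_nonneg.2 (hv.1 hcL)
  have e2 : 0 ≤ (e : ℤ) + v 0 - v L := by have := hv.2 L; omega
  have e3 : 0 ≤ v c' - v 0 := sub_nonneg.2 (hv.1 h0c')
  set n1 := (v L - v c).toNat with hn1
  set n2 := ((e : ℤ) + v 0 - v L).toNat with hn2
  set n3 := (v c' - v 0).toNat with hn3
  have s1 : lam.part L (a + n1) ≤ lam.part c a :=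
    aux_le0 lam v hv.1 hlam.1 c L hcL a (a + n1) (by omega)
  have s2 : lam.part 0 (a + n1 + n2) ≤ lam.part L (a + n1) := hlam.2.1 (a + n1)
  have s3 : lam.part c' (a + n1 + n2 + n3) ≤ lam.part 0 (a + n1 + n2) :=
    aux_le0 lam v hv.1 hlam.1 0 c' h0c' (a + n1 + n2) (a + n1 + n2 + n3) (by
      push_cast
      omega)
  have hN : a + n1 + n2 + n3 ≤ a' := by omega
  exact le_trans (lam.antitone c' _ _ hN) (le_trans s3 (le_trans s2 s1))

open MultiPartition in
/-- reading the addable and removable `i`-nodes of a FLOTW `l`-partition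
in increasing `≺_v`-order, the row length `len(γ) = λ^{(c)}_a` is weakly increasing,
and among nodes of equal row length every removable node precedes every addable one. -/
theorem flotw_order_by_length (e l : ℕ) [NeZero l] (he : 2 ≤ e)
    (v : Fin l → ℤ) (hv : memV e v)
    (lam : MultiPartition l) (hlam : IsFLOTW e v lam) (i : ZMod e)
    (γ δ : ℕ × ℕ × Fin l)
    (hγ : Removable lam γ ∨ Addable lam γ) (hresγ : res e v γ = i)
    (hδ : Removable lam δ ∨ Addable lam δ) (hresδ : res e v δ = i) :
    (lam.part γ.2.2 γ.1 < lam.part δ.2.2 δ.1 → prec v γ δ)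
    ∧ (lam.part γ.2.2 γ.1 = lam.part δ.2.2 δ.1 →
        Removable lam γ → Addable lam δ → prec v γ δ) := by
  obtain ⟨a, b, c⟩ := γ
  obtain ⟨a', b', c'⟩ := δ
  simp only [Removable, Addable, res, content, prec] at *
  -- residue congruence
  have hmod : (e : ℤ) ∣ (((b : ℤ) - a + v c) - ((b' : ℤ) - a' + v c')) := by
    have h1 : ((((b : ℤ) - a + v c) : ℤ) : ZMod e) = (((b' : ℤ) - a' + v c' : ℤ) : ZMod e) :=
      hresγ.trans hresδ.symm
    exact Int.ModEq.dvd ((ZMod.intCast_eq_intCast_iff _ _ _).1 h1.symm)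
  have hγ' : b ≤ lam.part c a ∧ lam.part c a ≤ b + 1 := by
    rcases hγ with h | h
    · omega
    · omega
  have hδ' : b' ≤ lam.part c' a' ∧ lam.part c' a' ≤ b' + 1 := by
    rcases hδ with h | h
    · omega
    · omega
  have hecc : (0 : ℤ) ≤ v c' - v c + e := by
    have h1 := hv.2 c
    have h2 : v 0 ≤ v c' := hv.1 (by
      simp only [Fin.le_def, Fin.val_zero]
      omega)
    omega
  constructor
  · intro hlt
    by_contra hnp
    push_neg at hnp
    obtain ⟨hCle, hCimp⟩ := hnp
    have hbb : b ≤ b' := by omega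
    rcases eq_or_lt_of_le hCle with heq | hlt2
    · have hcc : c ≤ c' := hCimp heq.symm
      have key : lam.part c' a' ≤ lam.part c a :=
        aux_le0 lam v hv.1 hlam.1 c c' hcc a a' (by push_cast; omega)
      omega
    · have hge : (e : ℤ) ≤ ((b : ℤ) - a + v c) - ((b' : ℤ) - a' + v c') :=
        Int.le_of_dvd (by omega) hmod
      have key : lam.part c' a' ≤ lam.part c a :=
        aux_le1 lam v hv hlam c c' a a' (by push_cast; omega)
      omega
  · intro hk hrem hadd
    by_contra hnp
    push_neg at hnp
    obtain ⟨hCle, hCimp⟩ := hnp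
    have hkγ : lam.part c a = b + 1 := hrem.1
    have hkδ : lam.part c' a' = b' := hadd.1
    have hbb : b + 1 = b' := by omega
    rcases eq_or_lt_of_le hCle with heq | hlt2
    · have hcc : c ≤ c' := hCimp heq.symm
      have hnn : 0 ≤ v c' - v c := sub_nonneg.2 (hv.1 hcc)
      have ha1 : (a : ℤ) + (v c' - v c) + 1 ≤ (a' : ℤ) := by omega
      have hpos : 1 ≤ a' := by omega
      rcases hadd.2 with h0 | hlt3
      · omega
      · have key : lam.part c' (a' - 1) ≤ lam.part c a :=
          aux_le0 lam v hv.1 hlam.1 c c' hcc a (a' - 1) (by push_cast [hpos]; omega)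
        omega
    · have hge : (e : ℤ) ≤ ((b : ℤ) - a + v c) - ((b' : ℤ) - a' + v c') :=
        Int.le_of_dvd (by omega) hmod
      have ha1 : (a : ℤ) + (v c' - v c + e) + 1 ≤ (a' : ℤ) := by omega
      have hpos : 1 ≤ a' := by omega
      rcases hadd.2 with h0 | hlt3
      · omega
      · have key : lam.part c' (a' - 1) ≤ lam.part c a :=
          aux_le1 lam v hv hlam c c' a (a' - 1) (by push_cast [hpos]; omega)
        omega
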